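/- arXiv:2402.19257 — 8 statements merged into one kernel-verified Lean document; each statement's English description precedes it below -/
import Mathlib

section
/- Let (G, ω, τ) be a weighted graph with the weighted incentive activation process, and let p* be any target vector (an incentive assignment activating all of V). Then ∑_{v ∈ V(G)} p*(v) ≥ ∑_{v ∈ V(G)} τ(v) − ∑_{e ∈ E(G)} ω(e). -/
open Finset

variable {V : Type*}

/-- Total weight of edges between `x` and active set `A`. -/
def Influence [Fintype V] [DecidableEq V] (G : SimpleGraph V) [DecidableRel G.Adj]
    (ω : Sym2 V → ℚ) (A : Finset V) (x : V) : ℚ :=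
  ∑ y ∈ A.filter (G.Adj x), ω s(x, y)

/-- Weighted activation process started from `A₀`. -/
def ActiveW [Fintype V] [DecidableEq V] (G : SimpleGraph V) [DecidableRel G.Adj]
    (ω : Sym2 V → ℚ) (τ : V → ℚ) (A₀ : Finset V) : ℕ → Finset V
  | 0 => A₀
  | t + 1 => ActiveW G ω τ A₀ t ∪
      Finset.univ.filter (fun x => τ x ≤ Influence G ω (ActiveW G ω τ A₀ t) x)

/-- `A₀` is a target set (dynamic monopoly): every vertex eventually activates. -/
def IsTargetSetW [Fintype V] [DecidableEq V] (G : SimpleGraph V) [DecidableRel G.Adj]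
    (ω : Sym2 V → ℚ) (τ : V → ℚ) (A₀ : Finset V) : Prop :=
  ∀ v : V, ∃ t, v ∈ ActiveW G ω τ A₀ t

/-- Incentive activation process for incentive assignment `p`. -/
def ActiveP [Fintype V] [DecidableEq V] (G : SimpleGraph V) [DecidableRel G.Adj]
    (ω : Sym2 V → ℚ) (τ : V → ℚ) (p : V → ℚ) : ℕ → Finset V
  | 0 => Finset.univ.filter (fun v => τ v ≤ p v)
  | t + 1 => ActiveP G ω τ p t ∪
      Finset.univ.filter (fun x => τ x ≤ Influence G ω (ActiveP G ω τ p t) x + p x)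

/-- `p` is a target vector: its incentive process activates every vertex. -/
def IsTargetVector [Fintype V] [DecidableEq V] (G : SimpleGraph V) [DecidableRel G.Adj]
    (ω : Sym2 V → ℚ) (τ : V → ℚ) (p : V → ℚ) : Prop :=
  ∀ v : V, ∃ t, v ∈ ActiveP G ω τ p t

/-- `τ` is a degenerate threshold assignment: every nonempty induced subgraph
(given by its vertex set `S`) has a vertex whose threshold is at least the total
weight of the edges of the induced subgraph incident to it. -/
def DegenerateW [Fintype V] [DecidableEq V] (G : SimpleGraph V) [DecidableRel G.Adj]
    (ω : Sym2 V → ℚ) (τ : V → ℚ) : Prop :=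
  ∀ S : Finset V, S.Nonempty → ∃ x ∈ S, Influence G ω S x ≤ τ x

/-- `u` is a degeneracy ordering: each vertex's threshold is at least the total
weight of edges to earlier vertices. -/
def IsDegOrder [Fintype V] [DecidableEq V] (G : SimpleGraph V) [DecidableRel G.Adj]
    (ω : Sym2 V → ℚ) (τ : V → ℚ) (u : Fin (Fintype.card V) ≃ V) : Prop :=
  ∀ i, (∑ j ∈ Finset.univ.filter (fun j => j < i ∧ G.Adj (u i) (u j)), ω s(u i, u j)) ≤ τ (u i)

/-- Unweighted activation process. -/
def ActiveU [Fintype V] [DecidableEq V] (G : SimpleGraph V) [DecidableRel G.Adj]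
    (τ : V → ℕ) (A₀ : Finset V) : ℕ → Finset V
  | 0 => A₀
  | t + 1 => ActiveU G τ A₀ t ∪
      Finset.univ.filter (fun x => τ x ≤ ((ActiveU G τ A₀ t).filter (G.Adj x)).card)

def IsTargetSetU [Fintype V] [DecidableEq V] (G : SimpleGraph V) [DecidableRel G.Adj]
    (τ : V → ℕ) (A₀ : Finset V) : Prop :=
  ∀ v : V, ∃ t, v ∈ ActiveU G τ A₀ t

lemma activeP_mono [Fintype V] [DecidableEq V] (G : SimpleGraph V) [DecidableRel G.Adj]
    (ω : Sym2 V → ℚ) (τ : V → ℚ) (p : V → ℚ) {s t : ℕ} (h : s ≤ t) :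
    ActiveP G ω τ p s ⊆ ActiveP G ω τ p t := by
  induction t, h using Nat.le_induction with
  | base => exact subset_rfl
  | succ n hn ih => exact ih.trans Finset.subset_union_left

/-- any target vector has total size at least `∑ τ − ∑ ω`. -/
theorem targetVector_lower_bound [Fintype V] [DecidableEq V] (G : SimpleGraph V)
    [DecidableRel G.Adj] (ω : Sym2 V → ℚ) (τ : V → ℚ) (p : V → ℚ)
    (hω : ∀ e ∈ G.edgeSet, 0 ≤ ω e) (hτ : ∀ v, 0 ≤ τ v) (hp : ∀ v, 0 ≤ p v)
    (htv : IsTargetVector G ω τ p) :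
    ∑ v : V, τ v - ∑ e ∈ G.edgeFinset, ω e ≤ ∑ v : V, p v := by
  classical
  set N : V → ℕ := fun v => Nat.find (htv v) with hN
  set B : V → Finset V := fun v => univ.filter (fun y => N y < N v) with hB
  have hmemIff : ∀ v t, v ∈ ActiveP G ω τ p t ↔ N v ≤ t := by
    intro v t
    constructor
    · intro h; exact Nat.find_min' (htv v) h
    · intro h; exact activeP_mono G ω τ p h (Nat.find_spec (htv v))
  have hsetEq : ∀ t, ActiveP G ω τ p t = univ.filter (fun y => N y ≤ t) := by
    intro t; ext y; simp [hmemIff]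
  have key : ∀ v, τ v ≤ Influence G ω (B v) v + p v := by
    intro v
    have hinf : 0 ≤ Influence G ω (B v) v := by
      apply Finset.sum_nonneg
      intro y hy
      rw [Finset.mem_filter] at hy
      exact hω _ ((SimpleGraph.mem_edgeSet G).2 hy.2)
    cases hNv : N v with
    | zero =>
      have hv0 : v ∈ ActiveP G ω τ p 0 := (hmemIff v 0).2 (le_of_eq hNv)
      simp only [ActiveP, Finset.mem_filter] at hv0
      linarith [hv0.2]
    | succ t =>
      have h1 : v ∈ ActiveP G ω τ p (t + 1) := (hmemIff v _).2 (le_of_eq hNv)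
      have h0 : v ∉ ActiveP G ω τ p t := by rw [hmemIff]; omega
      rw [ActiveP, Finset.mem_union] at h1
      rcases h1 with h | h
      · exact absurd h h0
      · rw [Finset.mem_filter] at h
        have hBe : ActiveP G ω τ p t = B v := by
          rw [hsetEq, hB]
          ext y
          simp only [Finset.mem_filter, Finset.mem_univ, true_and]
          omega
        rw [hBe] at h
        exact h.2
  set P : Finset (V × V) :=
    (univ ×ˢ univ).filter (fun q => G.Adj q.1 q.2 ∧ N q.2 < N q.1) with hP
  have sum2 : ∑ v : V, Influence G ω (B v) v = ∑ q ∈ P, ω s(q.1, q.2) := by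
    rw [hP, Finset.sum_filter, Finset.sum_product]
    apply Finset.sum_congr rfl
    intro v _
    rw [Influence, hB, Finset.filter_filter, Finset.sum_filter]
    apply Finset.sum_congr rfl
    intro y _
    by_cases h1 : G.Adj v y <;> by_cases h2 : N y < N v <;> simp [h1, h2]
  have sum3 : ∑ q ∈ P, ω s(q.1, q.2) ≤ ∑ e ∈ G.edgeFinset, ω e := by
    have himg : ∑ e ∈ P.image (fun q : V × V => s(q.1, q.2)), ω e
        = ∑ q ∈ P, ω s(q.1, q.2) := by
      apply Finset.sum_image
      intro x hx y hy hxy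
      rw [hP, Finset.mem_coe, Finset.mem_filter] at hx hy
      obtain ⟨-, -, hx2⟩ := hx
      obtain ⟨-, -, hy2⟩ := hy
      rcases Sym2.eq_iff.1 hxy with ⟨h1, h2⟩ | ⟨h1, h2⟩
      · exact Prod.ext h1 h2
      · rw [h1, h2] at hx2; omega
    rw [← himg]
    apply Finset.sum_le_sum_of_subset_of_nonneg
    · intro e he
      rw [Finset.mem_image] at he
      obtain ⟨q, hq, rfl⟩ := he
      rw [hP, Finset.mem_filter] at hq
      exact SimpleGraph.mem_edgeFinset.2 ((SimpleGraph.mem_edgeSet G).2 hq.2.1)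
    · intro e he _
      exact hω _ (SimpleGraph.mem_edgeFinset.1 he)
  have sum1 : ∑ v : V, τ v ≤ ∑ v : V, Influence G ω (B v) v + ∑ v : V, p v := by
    rw [← Finset.sum_add_distrib]
    exact Finset.sum_le_sum fun v _ => key v
  linarith
end

section
/- Let (G, ω, τ) be a weighted graph where τ is a degenerate threshold assignment. Then the minimum total size of a target vector equals ∑_{v ∈ V(G)} τ(v) − ∑_{e ∈ E(G)} ω(e); in particular a target vector of exactly this total size exists. -/
open Finset

variable {V : Type*}

section Aux
variable [Fintype V] [DecidableEq V] (G : SimpleGraph V) [DecidableRel G.Adj]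
  (ω : Sym2 V → ℚ) (τ : V → ℚ)

lemma influence_nonneg (hω : ∀ e ∈ G.edgeSet, 0 ≤ ω e) (A : Finset V) (x : V) :
    0 ≤ Influence G ω A x := by
  apply Finset.sum_nonneg
  intro y hy
  exact hω _ (G.mem_edgeSet.2 (Finset.mem_filter.1 hy).2)

lemma influence_mono (hω : ∀ e ∈ G.edgeSet, 0 ≤ ω e) {A B : Finset V} (h : A ⊆ B) (x : V) :
    Influence G ω A x ≤ Influence G ω B x := by
  apply Finset.sum_le_sum_of_subset_of_nonneg (Finset.filter_subset_filter _ h)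
  intro y hy _
  exact hω _ (G.mem_edgeSet.2 (Finset.mem_filter.1 hy).2)

lemma activeP_mono_t (p : V → ℚ) {s t : ℕ} (h : s ≤ t) :
    ActiveP G ω τ p s ⊆ ActiveP G ω τ p t := by
  induction h with
  | refl => exact Finset.Subset.refl _
  | step _ ih => exact ih.trans (Finset.subset_union_left)

lemma activeP_mono_p (hω : ∀ e ∈ G.edgeSet, 0 ≤ ω e) {p q : V → ℚ}
    (hpq : ∀ v, p v ≤ q v) (t : ℕ) :
    ActiveP G ω τ p t ⊆ ActiveP G ω τ q t := by
  induction t with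
  | zero =>
    intro v hv
    simp only [ActiveP, Finset.mem_filter, Finset.mem_univ, true_and] at hv ⊢
    exact hv.trans (hpq v)
  | succ t ih =>
    intro v hv
    rcases Finset.mem_union.1 hv with hv | hv
    · exact Finset.mem_union_left _ (ih hv)
    · apply Finset.mem_union_right
      simp only [Finset.mem_filter, Finset.mem_univ, true_and] at hv ⊢
      calc τ v ≤ Influence G ω (ActiveP G ω τ p t) v + p v := hv
        _ ≤ Influence G ω (ActiveP G ω τ q t) v + q v :=
          add_le_add (influence_mono G ω hω ih v) (hpq v)

/-- Summing a function of pairs over a `filter` of all pairs. -/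
lemma sum_sum_eq_sum_pairs (Q : V → V → Prop) [∀ v, DecidablePred (Q v)]
    (f : V → V → ℚ) :
    ∑ v : V, ∑ y ∈ Finset.univ.filter (fun y => Q v y), f v y
      = ∑ q ∈ (Finset.univ ×ˢ Finset.univ).filter (fun q : V × V => Q q.1 q.2),
          f q.1 q.2 := by
  rw [Finset.sum_filter, Finset.sum_product]
  exact Finset.sum_congr rfl fun v _ => Finset.sum_filter _ _

/-- Key counting identity: for any "orientation" `r` (asymmetric, total on distinct
vertices) the sum of `ω` over all edges equals the sum over oriented adjacent pairs. -/
lemma sum_edge_eq_sum_pairs (r : V → V → Prop) [DecidableRel r]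
    (hasymm : ∀ a b, r a b → ¬ r b a) (htot : ∀ a b : V, a ≠ b → r a b ∨ r b a) :
    ∑ e ∈ G.edgeFinset, ω e
      = ∑ q ∈ (Finset.univ ×ˢ Finset.univ).filter
          (fun q : V × V => G.Adj q.1 q.2 ∧ r q.2 q.1), ω s(q.1, q.2) := by
  have himg : (((Finset.univ ×ˢ Finset.univ).filter
      (fun q : V × V => G.Adj q.1 q.2 ∧ r q.2 q.1)).image
        (fun q : V × V => s(q.1, q.2))) = G.edgeFinset := by
    ext e
    induction e with
    | _ a b =>
      simp only [Finset.mem_image, Finset.mem_filter, Finset.mem_product,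
        SimpleGraph.mem_edgeFinset, SimpleGraph.mem_edgeSet, Finset.mem_univ, true_and]
      constructor
      · rintro ⟨⟨x, y⟩, ⟨hadj, _⟩, heq⟩
        rw [Sym2.eq_iff] at heq
        rcases heq with ⟨h1, h2⟩ | ⟨h1, h2⟩
        · rw [← h1, ← h2]; exact hadj
        · rw [← h1, ← h2]; exact hadj.symm
      · intro hadj
        rcases htot a b hadj.ne with h | h
        · exact ⟨(b, a), ⟨hadj.symm, h⟩, Sym2.eq_swap⟩
        · exact ⟨(a, b), ⟨hadj, h⟩, rfl⟩
  rw [← himg]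
  apply Finset.sum_image
  rintro ⟨x, y⟩ hxy ⟨x', y'⟩ hxy' heq
  simp only [Finset.mem_coe, Finset.mem_filter, Finset.mem_product, Finset.mem_univ, true_and] at hxy hxy'
  rw [Sym2.eq_iff] at heq
  rcases heq with ⟨h1, h2⟩ | ⟨h1, h2⟩
  · obtain rfl : x = x' := h1
    obtain rfl : y = y' := h2
    rfl
  · exfalso
    subst h1; subst h2
    exact hasymm _ _ hxy.2 hxy'.2

/-- Removing a vertex from the "total influence" sum. -/
lemma W_erase (S : Finset V) (x : V) (hx : x ∈ S) :
    ∑ v ∈ S, Influence G ω S v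
      = ∑ v ∈ S.erase x, Influence G ω (S.erase x) v
        + 2 * Influence G ω (S.erase x) x := by
  have hfe : (S.erase x).filter (G.Adj x) = S.filter (G.Adj x) := by
    ext y
    simp only [Finset.mem_filter, Finset.mem_erase]
    exact ⟨fun h => ⟨h.1.2, h.2⟩, fun h => ⟨⟨h.2.ne', h.1⟩, h.2⟩⟩
  have h1 : Influence G ω S x = Influence G ω (S.erase x) x := by
    unfold Influence; rw [hfe]
  have h2 : ∀ v ∈ S.erase x, Influence G ω S v
      = Influence G ω (S.erase x) v + (if G.Adj v x then ω s(v, x) else 0) := by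
    intro v hv
    have hvx : v ≠ x := (Finset.mem_erase.1 hv).1
    unfold Influence
    by_cases h : G.Adj v x
    · have hset : S.filter (G.Adj v) = insert x ((S.erase x).filter (G.Adj v)) := by
        ext y
        simp only [Finset.mem_filter, Finset.mem_insert, Finset.mem_erase]
        constructor
        · intro hy
          rcases eq_or_ne y x with rfl | hyx
          · exact Or.inl rfl
          · exact Or.inr ⟨⟨hyx, hy.1⟩, hy.2⟩
        · rintro (rfl | hy)
          · exact ⟨hx, h⟩
          · exact ⟨hy.1.2, hy.2⟩
      rw [hset, Finset.sum_insert (by simp)]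
      rw [if_pos h]
      ring
    · have hset : S.filter (G.Adj v) = (S.erase x).filter (G.Adj v) := by
        ext y
        simp only [Finset.mem_filter, Finset.mem_erase]
        constructor
        · intro hy
          refine ⟨⟨?_, hy.1⟩, hy.2⟩
          rintro rfl; exact h hy.2
        · exact fun hy => ⟨hy.1.2, hy.2⟩
      rw [hset, if_neg h, add_zero]
  have h3 : ∑ v ∈ S.erase x, (if G.Adj v x then ω s(v, x) else 0)
      = Influence G ω (S.erase x) x := by
    rw [Influence, Finset.sum_filter]
    apply Finset.sum_congr rfl
    intro v _
    by_cases h : G.Adj v x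
    · rw [if_pos h, if_pos h.symm, Sym2.eq_swap]
    · rw [if_neg h, if_neg (fun h' => h h'.symm)]
  calc ∑ v ∈ S, Influence G ω S v
      = ∑ v ∈ S.erase x, Influence G ω S v + Influence G ω S x :=
        (Finset.sum_erase_add S _ hx).symm
    _ = (∑ v ∈ S.erase x, (Influence G ω (S.erase x) v
          + (if G.Adj v x then ω s(v, x) else 0))) + Influence G ω (S.erase x) x := by
        rw [Finset.sum_congr rfl h2, h1]
    _ = ∑ v ∈ S.erase x, Influence G ω (S.erase x) v
        + 2 * Influence G ω (S.erase x) x := by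
        rw [Finset.sum_add_distrib, h3]; ring

/-- Construction of an optimal incentive vector on a vertex set `S`. -/
lemma exists_good_p (hω : ∀ e ∈ G.edgeSet, 0 ≤ ω e) (hdeg : DegenerateW G ω τ)
    (S : Finset V) :
    ∃ p : V → ℚ, (∀ v, 0 ≤ p v) ∧ (∀ v, v ∉ S → p v = 0) ∧
      (∃ t, S ⊆ ActiveP G ω τ p t) ∧
      ∑ v ∈ S, p v = ∑ v ∈ S, τ v - (1 / 2) * ∑ v ∈ S, Influence G ω S v := by
  induction S using Finset.strongInduction with
  | _ S ih =>
    rcases S.eq_empty_or_nonempty with rfl | hne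
    · exact ⟨0, fun v => le_refl 0, fun v _ => rfl, ⟨0, by simp⟩, by simp⟩
    obtain ⟨x, hxS, hx⟩ := hdeg S hne
    obtain ⟨p', hp'0, hp'supp, ⟨t', ht'⟩, hsum'⟩ := ih (S.erase x) (Finset.erase_ssubset hxS)
    have hIS : Influence G ω S x = Influence G ω (S.erase x) x := by
      unfold Influence
      congr 1
      ext y
      simp only [Finset.mem_filter, Finset.mem_erase]
      exact ⟨fun h => ⟨⟨h.2.ne', h.1⟩, h.2⟩, fun h => ⟨h.1.2, h.2⟩⟩
    set δ : ℚ := τ x - Influence G ω (S.erase x) x with hδdef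
    have hδ : 0 ≤ δ := by rw [hδdef, ← hIS]; linarith
    set p : V → ℚ := fun v => if v = x then δ else p' v with hpdef
    have hpq : ∀ v, p' v ≤ p v := by
      intro v
      by_cases h : v = x
      · have h1 : p v = δ := by simp [hpdef, h]
        have h2 : p' v = 0 := hp'supp v (by rw [h]; exact Finset.notMem_erase x S)
        rw [h1, h2]; exact hδ
      · simp [hpdef, h]
    have hA : S.erase x ⊆ ActiveP G ω τ p t' :=
      ht'.trans (activeP_mono_p G ω τ hω hpq t')
    refine ⟨p, ?_, ?_, ⟨t' + 1, ?_⟩, ?_⟩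
    · intro v
      by_cases h : v = x
      · simp [hpdef, h, hδ]
      · simp only [hpdef, if_neg h]; exact hp'0 v
    · intro v hv
      have hvx : v ≠ x := fun h => hv (h ▸ hxS)
      simp only [hpdef, if_neg hvx]
      exact hp'supp v (fun h => hv (Finset.mem_of_mem_erase h))
    · intro v hv
      rcases eq_or_ne v x with rfl | hvx
      · apply Finset.mem_union_right
        simp only [Finset.mem_filter, Finset.mem_univ, true_and]
        have hle : Influence G ω (S.erase v) v ≤ Influence G ω (ActiveP G ω τ p t') v :=
          influence_mono G ω hω hA v
        have hpv : p v = δ := by simp [hpdef]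
        rw [hpv, hδdef]
        linarith
      · exact Finset.mem_union_left _ (hA (Finset.mem_erase.2 ⟨hvx, hv⟩))
    · have e1 : ∑ v ∈ S.erase x, p v + p x = ∑ v ∈ S, p v := Finset.sum_erase_add S p hxS
      have e2 : ∑ v ∈ S.erase x, τ v + τ x = ∑ v ∈ S, τ v := Finset.sum_erase_add S τ hxS
      have e3 : ∑ v ∈ S.erase x, p v = ∑ v ∈ S.erase x, p' v := by
        apply Finset.sum_congr rfl
        intro v hv
        simp [hpdef, (Finset.mem_erase.1 hv).1]
      have e4 : p x = δ := by simp [hpdef]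
      have e5 := W_erase G ω S x hxS
      rw [← e1, e3, hsum', e4, hδdef, ← e2, e5]
      ring

end Aux

/-- for degenerate thresholds, the minimum total size of a target
vector equals `∑ τ − ∑ ω`, and this minimum is attained. -/
theorem degenerate_optimal_target_vector [Fintype V] [DecidableEq V] (G : SimpleGraph V)
    [DecidableRel G.Adj] (ω : Sym2 V → ℚ) (τ : V → ℚ)
    (hω : ∀ e ∈ G.edgeSet, 0 ≤ ω e) (hτ : ∀ v, 0 ≤ τ v)
    (hdeg : DegenerateW G ω τ) :
    IsLeast {s : ℚ | ∃ p : V → ℚ, (∀ v, 0 ≤ p v) ∧ IsTargetVector G ω τ p ∧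
        ∑ v : V, p v = s}
      (∑ v : V, τ v - ∑ e ∈ G.edgeFinset, ω e) := by
  set ι : V → ℕ := fun v => (Fintype.equivFin V v : ℕ) with hιdef
  have hιinj : Function.Injective ι := fun a b h =>
    (Fintype.equivFin V).injective (Fin.val_injective h)
  constructor
  · -- membership: the constructed incentive vector is optimal
    have hhand : ∑ v : V, Influence G ω Finset.univ v
        = 2 * ∑ e ∈ G.edgeFinset, ω e := by
      have hsplit : ∀ v : V, Influence G ω Finset.univ v
          = (∑ y ∈ Finset.univ.filter (fun y => G.Adj v y ∧ ι y < ι v), ω s(v, y))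
            + ∑ y ∈ Finset.univ.filter (fun y => G.Adj v y ∧ ι v < ι y), ω s(v, y) := by
        intro v
        rw [Influence, ← Finset.sum_filter_add_sum_filter_not (Finset.univ.filter (G.Adj v))
          (fun y => ι y < ι v) (fun y => ω s(v, y)), Finset.filter_filter,
          Finset.filter_filter]
        congr 1
        apply Finset.sum_congr _ fun _ _ => rfl
        apply Finset.filter_congr
        intro y _
        constructor
        · rintro ⟨hadj, hnlt⟩
          exact ⟨hadj, lt_of_le_of_ne (not_lt.1 hnlt) fun h => hadj.ne (hιinj h)⟩
        · rintro ⟨hadj, hlt⟩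
          exact ⟨hadj, not_lt.2 hlt.le⟩
      have k1 : ∑ v : V, ∑ y ∈ Finset.univ.filter (fun y => G.Adj v y ∧ ι y < ι v), ω s(v, y)
          = ∑ e ∈ G.edgeFinset, ω e := by
        rw [sum_sum_eq_sum_pairs]
        exact (sum_edge_eq_sum_pairs G ω (fun a b => ι a < ι b)
          (fun a b h h' => absurd (h.trans h') (lt_irrefl _))
          (fun a b hab => Ne.lt_or_gt fun h => hab (hιinj h))).symm
      have k2 : ∑ v : V, ∑ y ∈ Finset.univ.filter (fun y => G.Adj v y ∧ ι v < ι y), ω s(v, y)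
          = ∑ e ∈ G.edgeFinset, ω e := by
        rw [sum_sum_eq_sum_pairs]
        exact (sum_edge_eq_sum_pairs G ω (fun a b => ι b < ι a)
          (fun a b h h' => absurd (h'.trans h) (lt_irrefl _))
          (fun a b hab => (Ne.lt_or_gt fun h => hab (hιinj h)).symm)).symm
      rw [Finset.sum_congr rfl fun v _ => hsplit v, Finset.sum_add_distrib, k1, k2]
      ring
    obtain ⟨p, hp0, _, ⟨t, ht⟩, hsum⟩ := exists_good_p G ω τ hω hdeg Finset.univ
    refine ⟨p, hp0, fun v => ⟨t, ht (Finset.mem_univ v)⟩, ?_⟩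
    rw [hsum, hhand]
    ring
  · -- lower bound
    rintro s ⟨p, hp0, htv, rfl⟩
    set T : V → ℕ := fun v => Nat.find (htv v) with hTdef
    have hTspec : ∀ v, v ∈ ActiveP G ω τ p (T v) := fun v => Nat.find_spec (htv v)
    have hTle : ∀ v k, v ∈ ActiveP G ω τ p k → T v ≤ k := fun v k h => Nat.find_min' (htv v) h
    have hTmin : ∀ v k, k < T v → v ∉ ActiveP G ω τ p k := fun v k h => Nat.find_min (htv v) h
    have claim : ∀ v : V, τ v ≤ p v
        + ∑ y ∈ Finset.univ.filter (fun y => G.Adj v y ∧ T y < T v), ω s(v, y) := by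
      intro v
      have hnn : (0:ℚ) ≤ ∑ y ∈ Finset.univ.filter (fun y => G.Adj v y ∧ T y < T v),
          ω s(v, y) := Finset.sum_nonneg fun y hy =>
        hω _ (G.mem_edgeSet.2 (Finset.mem_filter.1 hy).2.1)
      by_cases hT0 : T v = 0
      · have hv0 : v ∈ ActiveP G ω τ p 0 := hT0 ▸ hTspec v
        simp only [ActiveP, Finset.mem_filter, Finset.mem_univ, true_and] at hv0
        linarith
      · obtain ⟨k, hT⟩ : ∃ k, T v = k + 1 := ⟨T v - 1, by omega⟩
        have hvmem : v ∈ ActiveP G ω τ p (k + 1) := hT ▸ hTspec v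
        have hvnot : v ∉ ActiveP G ω τ p k := hTmin v k (by omega)
        simp only [ActiveP] at hvmem
        rcases Finset.mem_union.1 hvmem with h | h
        · exact absurd h hvnot
        simp only [Finset.mem_filter, Finset.mem_univ, true_and] at h
        have hsub : (ActiveP G ω τ p k).filter (G.Adj v)
            ⊆ Finset.univ.filter (fun y => G.Adj v y ∧ T y < T v) := by
          intro y hy
          rcases Finset.mem_filter.1 hy with ⟨hyA, hyadj⟩
          refine Finset.mem_filter.2 ⟨Finset.mem_univ y, hyadj, ?_⟩
          have := hTle y k hyA
          omega
        have hle := Finset.sum_le_sum_of_subset_of_nonneg hsub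
          (fun y hy _ => hω _ (G.mem_edgeSet.2 (Finset.mem_filter.1 hy).2.1))
        rw [Influence] at h
        linarith
    have h2 : ∑ v : V, ∑ y ∈ Finset.univ.filter (fun y => G.Adj v y ∧ T y < T v), ω s(v, y)
        ≤ ∑ e ∈ G.edgeFinset, ω e := by
      rw [sum_sum_eq_sum_pairs]
      rw [sum_edge_eq_sum_pairs G ω (fun a b => T a < T b ∨ (T a = T b ∧ ι a < ι b))
        (by
          intro a b h h'
          rcases h with h | ⟨h1, h2⟩ <;> rcases h' with h' | ⟨h1', h2'⟩ <;> omega)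
        (by
          intro a b hab
          have hne : ι a ≠ ι b := fun h => hab (hιinj h)
          rcases lt_trichotomy (T a) (T b) with h | h | h
          · exact Or.inl (Or.inl h)
          · rcases lt_or_gt_of_ne hne with h' | h'
            · exact Or.inl (Or.inr ⟨h, h'⟩)
            · exact Or.inr (Or.inr ⟨h.symm, h'⟩)
          · exact Or.inr (Or.inl h))]
      apply Finset.sum_le_sum_of_subset_of_nonneg
      · intro q hq
        rcases Finset.mem_filter.1 hq with ⟨hqp, hadj, hlt⟩
        exact Finset.mem_filter.2 ⟨hqp, hadj, Or.inl hlt⟩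
      · intro q hq _
        exact hω _ (G.mem_edgeSet.2 (Finset.mem_filter.1 hq).2.1)
    have h1 : ∑ v : V, τ v ≤ ∑ v : V, (p v
        + ∑ y ∈ Finset.univ.filter (fun y => G.Adj v y ∧ T y < T v), ω s(v, y)) :=
      Finset.sum_le_sum fun v _ => claim v
    rw [Finset.sum_add_distrib] at h1
    linarith
end

section
/- Let (G, ω, τ) be a weighted graph where τ is degenerate, with degeneracy ordering u₁, …, uₙ (so τ(uᵢ) ≥ ∑ ω(e) over edges between uᵢ and earlier vertices). Define S = {uᵢ : τ(uᵢ) > ∑_{e ∈ E(uᵢ,R)} ω(e)}, where E(uᵢ,R) is the set of edges between uᵢ and {u₁,…,u_{i−1}}. Then S is a target set for (G, ω, τ): activating S activates the entire graph. -/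
open Finset

variable {V : Type*}

lemma aux_strict_target [Fintype V] [DecidableEq V] (G : SimpleGraph V)
    [DecidableRel G.Adj] (ω : Sym2 V → ℚ) (τ : V → ℚ)
    (hω : ∀ e ∈ G.edgeSet, 0 ≤ ω e)
    (u : Fin (Fintype.card V) ≃ V) (A₀ : Finset V)
    (hA : ∀ i : Fin (Fintype.card V),
      (∑ j ∈ Finset.univ.filter (fun j => j < i ∧ G.Adj (u i) (u j)), ω s(u i, u j)) < τ (u i) →
      u i ∈ A₀) :
    IsTargetSetW G ω τ A₀ := by
  classical
  have mono : ∀ s t, s ≤ t → ActiveW G ω τ A₀ s ⊆ ActiveW G ω τ A₀ t := by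
    intro s t h
    induction t with
    | zero => simp_all
    | succ t ih =>
      rcases Nat.lt_or_ge s (t+1) with h' | h'
      · exact (ih (Nat.lt_succ_iff.mp h')).trans Finset.subset_union_left
      · have : s = t + 1 := le_antisymm h h'
        subst this; exact Finset.Subset.refl _
  have key : ∀ k, ∀ i : Fin (Fintype.card V), (i : ℕ) < k → u i ∈ ActiveW G ω τ A₀ k := by
    intro k
    induction k with
    | zero => intro i h; omega
    | succ k ih =>
      intro i hi
      rcases Nat.lt_or_ge (i : ℕ) k with h' | h'
      · exact mono k (k+1) (Nat.le_succ k) (ih i h')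
      · by_cases hst : (∑ j ∈ Finset.univ.filter (fun j => j < i ∧ G.Adj (u i) (u j)),
            ω s(u i, u j)) < τ (u i)
        · exact mono 0 (k+1) (Nat.zero_le _) (hA i hst)
        · have hτ : τ (u i) ≤ ∑ j ∈ Finset.univ.filter (fun j => j < i ∧ G.Adj (u i) (u j)),
              ω s(u i, u j) := le_of_not_gt hst
          have hsub : (Finset.univ.filter (fun j => j < i ∧ G.Adj (u i) (u j))).image u ⊆
              (ActiveW G ω τ A₀ k).filter (G.Adj (u i)) := by
            intro y hy
            obtain ⟨j, hj, rfl⟩ := Finset.mem_image.mp hy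
            obtain ⟨-, hji, hadj⟩ := Finset.mem_filter.mp hj
            exact Finset.mem_filter.mpr ⟨ih j (by omega), hadj⟩
          have hsum : (∑ j ∈ Finset.univ.filter (fun j => j < i ∧ G.Adj (u i) (u j)),
              ω s(u i, u j)) ≤ Influence G ω (ActiveW G ω τ A₀ k) (u i) := by
            rw [show (∑ j ∈ Finset.univ.filter (fun j => j < i ∧ G.Adj (u i) (u j)),
                ω s(u i, u j)) =
                ∑ y ∈ (Finset.univ.filter (fun j => j < i ∧ G.Adj (u i) (u j))).image u,
                  ω s(u i, y) from
              (Finset.sum_image (f := fun y => ω s(u i, y)) (g := u)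
                (fun a _ b _ h => u.injective h)).symm]
            refine Finset.sum_le_sum_of_subset_of_nonneg hsub ?_
            intro y hy _
            exact hω _ ((Finset.mem_filter.mp hy).2)
          exact Finset.mem_union_right _ (Finset.mem_filter.mpr
            ⟨Finset.mem_univ _, hτ.trans hsum⟩)
  intro v
  have := key (Fintype.card V) (u.symm v) (u.symm v).isLt
  rw [Equiv.apply_symm_apply] at this
  exact ⟨Fintype.card V, this⟩

/-- the vertices where the degeneracy-ordering inequality is strict
form a target set. -/
theorem strict_vertices_isTargetSet [Fintype V] [DecidableEq V] (G : SimpleGraph V)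
    [DecidableRel G.Adj] (ω : Sym2 V → ℚ) (τ : V → ℚ)
    (hω : ∀ e ∈ G.edgeSet, 0 ≤ ω e)
    (u : Fin (Fintype.card V) ≃ V) (hu : IsDegOrder G ω τ u) :
    IsTargetSetW G ω τ
      ((Finset.univ.filter (fun i : Fin (Fintype.card V) =>
        (∑ j ∈ Finset.univ.filter (fun j => j < i ∧ G.Adj (u i) (u j)), ω s(u i, u j))
          < τ (u i))).image u) := by
  exact aux_strict_target G ω τ hω u _ (fun i h =>
    Finset.mem_image.mpr ⟨i, Finset.mem_filter.mpr ⟨Finset.mem_univ _, h⟩, rfl⟩)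
end

section
/- Let (G, ω, τ) be a weighted graph with weighted activation process, and let S* be any target set of (G, ω, τ). Then ∑_{u ∈ V(G)∖S*} τ(u) ≤ ∑_{e ∈ E(G)} ω(e). -/
open Finset

variable {V : Type*}

section Aux

open Classical in
/-- Edge `e` has been "used" by time `t`: it can be written `s(x,y)` where `x`
activated after some round `k < t` at which `y` was already active. -/
private def UsedEdge [Fintype V] [DecidableEq V] (G : SimpleGraph V) [DecidableRel G.Adj]
    (ω : Sym2 V → ℚ) (τ : V → ℚ) (S : Finset V) (t : ℕ) (e : Sym2 V) : Prop :=
  ∃ x y, e = s(x, y) ∧ x ∈ ActiveW G ω τ S t ∧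
    ∃ k, k < t ∧ y ∈ ActiveW G ω τ S k ∧ x ∉ ActiveW G ω τ S k

private lemma activeW_subset_succ [Fintype V] [DecidableEq V] (G : SimpleGraph V)
    [DecidableRel G.Adj] (ω : Sym2 V → ℚ) (τ : V → ℚ) (S : Finset V) (t : ℕ) :
    ActiveW G ω τ S t ⊆ ActiveW G ω τ S (t + 1) :=
  Finset.subset_union_left

private lemma activeW_mono [Fintype V] [DecidableEq V] (G : SimpleGraph V)
    [DecidableRel G.Adj] (ω : Sym2 V → ℚ) (τ : V → ℚ) (S : Finset V) {s t : ℕ} (h : s ≤ t) :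
    ActiveW G ω τ S s ⊆ ActiveW G ω τ S t := by
  induction t with
  | zero => simp [Nat.le_zero.mp h]
  | succ n ih =>
    rcases Nat.lt_or_ge s (n+1) with h' | h'
    · exact (ih (Nat.lt_succ_iff.mp h')).trans (activeW_subset_succ G ω τ S n)
    · have : s = n + 1 := le_antisymm h h'
      simp [this]

open Classical in
private lemma key [Fintype V] [DecidableEq V] (G : SimpleGraph V)
    [DecidableRel G.Adj] (ω : Sym2 V → ℚ) (τ : V → ℚ)
    (hω : ∀ e ∈ G.edgeSet, 0 ≤ ω e) (hτ : ∀ v, 0 ≤ τ v) (S : Finset V) :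
    ∀ t, ∑ v ∈ ActiveW G ω τ S t \ S, τ v ≤
      ∑ e ∈ G.edgeFinset.filter (UsedEdge G ω τ S t), ω e := by
  intro t
  induction t with
  | zero =>
    have h1 : ActiveW G ω τ S 0 \ S = ∅ := by simp [ActiveW]
    rw [h1, Finset.sum_empty]
    exact Finset.sum_nonneg fun e he => hω e (by
      have := Finset.mem_filter.mp he
      exact (SimpleGraph.mem_edgeFinset).mp this.1)
  | succ t ih =>
    set A := ActiveW G ω τ S t with hA
    set A' := ActiveW G ω τ S (t+1) with hA'
    have hsub : A ⊆ A' := activeW_subset_succ G ω τ S t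
    -- new vertices
    set D := A' \ A with hD
    have hDthresh : ∀ x ∈ D, τ x ≤ Influence G ω A x := by
      intro x hx
      rcases Finset.mem_sdiff.mp hx with ⟨hx1, hx2⟩
      have : x ∈ A ∪ Finset.univ.filter (fun x => τ x ≤ Influence G ω A x) := hx1
      rcases Finset.mem_union.mp this with h | h
      · exact absurd h hx2
      · exact (Finset.mem_filter.mp h).2
    -- split LHS
    have hsplit : A' \ S = (A \ S) ∪ (D \ S) := by
      ext v
      simp only [Finset.mem_union, Finset.mem_sdiff, hD]
      constructor
      · rintro ⟨hv, hvS⟩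
        by_cases hvA : v ∈ A
        · exact Or.inl ⟨hvA, hvS⟩
        · exact Or.inr ⟨⟨hv, hvA⟩, hvS⟩
      · rintro (⟨hv, hvS⟩ | ⟨⟨hv, _⟩, hvS⟩) <;> exact ⟨by first | exact hsub hv | exact hv, hvS⟩
    have hdisj : Disjoint (A \ S) (D \ S) := by
      refine Finset.disjoint_left.mpr ?_
      intro v hv hv'
      exact (Finset.mem_sdiff.mp (Finset.mem_sdiff.mp hv').1).2 (Finset.mem_sdiff.mp hv).1
    rw [hsplit, Finset.sum_union hdisj]
    -- bound the new part by influence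
    have hstep1 : ∑ v ∈ D \ S, τ v ≤ ∑ x ∈ D, Influence G ω A x := by
      calc ∑ v ∈ D \ S, τ v ≤ ∑ v ∈ D \ S, Influence G ω A v :=
            Finset.sum_le_sum fun v hv => hDthresh v (Finset.mem_sdiff.mp hv).1
        _ ≤ ∑ x ∈ D, Influence G ω A x := by
            refine Finset.sum_le_sum_of_subset_of_nonneg Finset.sdiff_subset ?_
            intro x _ _
            refine Finset.sum_nonneg fun y hy => hω _ ?_
            exact (Finset.mem_filter.mp hy).2
    -- influence as sum over used-edge image
    set P := D.sigma (fun x => A.filter (G.Adj x)) with hP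
    have hinf : ∑ x ∈ D, Influence G ω A x = ∑ p ∈ P, ω s(p.1, p.2) := by
      rw [hP, Finset.sum_sigma]
      rfl
    have hinj : ∀ p ∈ P, ∀ q ∈ P, (s(p.1, p.2) : Sym2 V) = s(q.1, q.2) → p = q := by
      rintro ⟨x, y⟩ hp ⟨x', y'⟩ hq h
      simp only [hP, Finset.mem_sigma, Finset.mem_filter] at hp hq
      have hx : x ∉ A := (Finset.mem_sdiff.mp hp.1).2
      have hy' : y' ∈ A := hq.2.1
      have h' : s(x, y) = s(x', y') := h
      rcases Sym2.eq_iff.mp h' with ⟨h1, h2⟩ | ⟨h1, h2⟩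
      · subst h1; subst h2; rfl
      · subst h1; exact absurd hy' hx
    set I := P.image (fun p => (s(p.1, p.2) : Sym2 V)) with hI
    have himg : ∑ p ∈ P, ω s(p.1, p.2) = ∑ e ∈ I, ω e := (Finset.sum_image hinj).symm
    -- I consists of edges used at time t+1 but not at time t, old used edges persist
    have hIsub : I ⊆ G.edgeFinset.filter (UsedEdge G ω τ S (t+1)) := by
      intro e he
      rcases Finset.mem_image.mp he with ⟨⟨x, y⟩, hp, rfl⟩
      simp only [hP, Finset.mem_sigma, Finset.mem_filter] at hp
      obtain ⟨hxD, hyA, hadj⟩ := hp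
      rcases Finset.mem_sdiff.mp hxD with ⟨hxA', hxA⟩
      refine Finset.mem_filter.mpr ⟨SimpleGraph.mem_edgeFinset.mpr hadj, ?_⟩
      exact ⟨x, y, rfl, hxA', t, Nat.lt_succ_self t, hyA, hxA⟩
    have hOldsub : G.edgeFinset.filter (UsedEdge G ω τ S t) ⊆
        G.edgeFinset.filter (UsedEdge G ω τ S (t+1)) := by
      intro e he
      rcases Finset.mem_filter.mp he with ⟨he1, x, y, rfl, hx, k, hk, hy, hxk⟩
      exact Finset.mem_filter.mpr ⟨he1, x, y, rfl, hsub hx, k, hk.trans (Nat.lt_succ_self t), hy, hxk⟩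
    have hdisj2 : Disjoint (G.edgeFinset.filter (UsedEdge G ω τ S t)) I := by
      refine Finset.disjoint_left.mpr ?_
      rintro e he heI
      rcases Finset.mem_filter.mp he with ⟨_, x, y, rfl, hx, k, hk, hy, hxk⟩
      rcases Finset.mem_image.mp heI with ⟨⟨x', y'⟩, hp, hpe⟩
      simp only [hP, Finset.mem_sigma, Finset.mem_filter] at hp
      have hx'A : x' ∉ A := (Finset.mem_sdiff.mp hp.1).2
      have hyA : y ∈ A := activeW_mono G ω τ S (Nat.le_of_lt hk) hy
      have hxA : x ∈ A := by
        -- x ∈ ActiveW t since x ∈ A_t? We know x ∈ A_t from hx : x ∈ ActiveW t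
        exact hx
      have hpe' : s(x', y') = s(x, y) := hpe
      rcases Sym2.eq_iff.mp hpe' with ⟨h1, h2⟩ | ⟨h1, h2⟩
      · exact hx'A (h1 ▸ hxA)
      · exact hx'A (h1 ▸ hyA)
    have hcomb : ∑ e ∈ G.edgeFinset.filter (UsedEdge G ω τ S t), ω e + ∑ e ∈ I, ω e ≤
        ∑ e ∈ G.edgeFinset.filter (UsedEdge G ω τ S (t+1)), ω e := by
      rw [← Finset.sum_union hdisj2]
      refine Finset.sum_le_sum_of_subset_of_nonneg (Finset.union_subset hOldsub hIsub) ?_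
      intro e he _
      exact hω e (SimpleGraph.mem_edgeFinset.mp (Finset.mem_filter.mp he).1)
    calc ∑ v ∈ A \ S, τ v + ∑ v ∈ D \ S, τ v
        ≤ ∑ e ∈ G.edgeFinset.filter (UsedEdge G ω τ S t), ω e + ∑ e ∈ I, ω e := by
          refine add_le_add ih ?_
          rw [← himg, ← hinf]; exact hstep1
      _ ≤ _ := hcomb

end Aux

/-- for any target set `S*`, the thresholds outside `S*` sum to at
most the total edge weight. -/
theorem sum_tau_outside_targetSet_le [Fintype V] [DecidableEq V] (G : SimpleGraph V)
    [DecidableRel G.Adj] (ω : Sym2 V → ℚ) (τ : V → ℚ)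
    (hω : ∀ e ∈ G.edgeSet, 0 ≤ ω e) (hτ : ∀ v, 0 ≤ τ v)
    (S : Finset V) (hS : IsTargetSetW G ω τ S) :
    ∑ v ∈ Finset.univ \ S, τ v ≤ ∑ e ∈ G.edgeFinset, ω e := by
  classical
  -- choose a time by which everything is active
  obtain ⟨N, hN⟩ : ∃ N, ∀ v : V, v ∈ ActiveW G ω τ S N := by
    choose f hf using hS
    refine ⟨Finset.univ.sup f, fun v => ?_⟩
    exact activeW_mono G ω τ S (Finset.le_sup (Finset.mem_univ v)) (hf v)
  have hAN : ActiveW G ω τ S N = Finset.univ := Finset.eq_univ_iff_forall.mpr hN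
  calc ∑ v ∈ Finset.univ \ S, τ v = ∑ v ∈ ActiveW G ω τ S N \ S, τ v := by rw [hAN]
    _ ≤ ∑ e ∈ G.edgeFinset.filter (UsedEdge G ω τ S N), ω e := key G ω τ hω hτ S N
    _ ≤ ∑ e ∈ G.edgeFinset, ω e := by
        refine Finset.sum_le_sum_of_subset_of_nonneg (Finset.filter_subset _ _) ?_
        intro e he _
        exact hω e (SimpleGraph.mem_edgeFinset.mp he)
end

section
/- Let G be a connected finite simple graph with edge weights ω: E(G) → ℚ>0 and thresholds τ: V(G) → ℚ≥0, and let μ = min{ω(e) : e ∈ E(G)}. Suppose every vertex u satisfies τ(u) ≥ (∑_{e incident to u} ω(e)) − μ, and suppose some vertex x satisfies τ(x) ≥ ∑_{e incident to x} ω(e). Then τ is a degenerate threshold assignment for G, i.e., every nonempty induced subgraph H of G has a vertex y with τ(y) ≥ ∑_{e ∈ E(y,H)} ω(e). -/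
open Finset

variable {V : Type*}

/-- in a connected graph with positive weights, if every vertex's
threshold is at least its total incident weight minus the minimum edge weight,
and some vertex's threshold is at least its full incident weight, then `τ` is
degenerate. -/
theorem degenerate_of_near_full_thresholds [Fintype V] [DecidableEq V] (G : SimpleGraph V)
    [DecidableRel G.Adj] (ω : Sym2 V → ℚ) (τ : V → ℚ) (μ : ℚ)
    (hconn : G.Connected) (hne : G.edgeSet.Nonempty)
    (hpos : ∀ e ∈ G.edgeSet, 0 < ω e) (hτ : ∀ v, 0 ≤ τ v)
    (hμ : IsLeast (ω '' G.edgeSet) μ)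
    (hall : ∀ v, Influence G ω Finset.univ v - μ ≤ τ v)
    (hx : ∃ x, Influence G ω Finset.univ x ≤ τ x) :
    DegenerateW G ω τ := by
  intro S hS
  by_cases hcross : ∃ x ∈ S, ∃ y, y ∉ S ∧ G.Adj x y
  · obtain ⟨x, hxS, y, hyS, hadj⟩ := hcross
    refine ⟨x, hxS, ?_⟩
    have hyf : y ∉ S.filter (G.Adj x) := fun h => hyS (Finset.mem_filter.mp h).1
    have hsub : insert y (S.filter (G.Adj x)) ⊆ Finset.univ.filter (G.Adj x) := by
      intro z hz
      rcases Finset.mem_insert.mp hz with rfl | hz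
      · exact Finset.mem_filter.mpr ⟨Finset.mem_univ _, hadj⟩
      · exact Finset.mem_filter.mpr ⟨Finset.mem_univ _, (Finset.mem_filter.mp hz).2⟩
    have hkey : ∑ z ∈ insert y (S.filter (G.Adj x)), ω s(x, z)
        ≤ Influence G ω Finset.univ x := by
      refine Finset.sum_le_sum_of_subset_of_nonneg hsub ?_
      intro i hi _
      exact le_of_lt (hpos _ ((G.mem_edgeSet).mpr (Finset.mem_filter.mp hi).2))
    rw [Finset.sum_insert hyf] at hkey
    have hμy : μ ≤ ω s(x, y) := hμ.2 ⟨s(x, y), hadj, rfl⟩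
    have h1 := hall x
    unfold Influence at *
    linarith
  · push_neg at hcross
    have hclosed : ∀ a ∈ S, ∀ b, G.Adj a b → b ∈ S := by
      intro a ha b hab
      by_contra hb
      exact hcross a ha b hb hab
    have key : ∀ (a b : V), G.Walk a b → a ∈ S → b ∈ S := by
      intro a b w
      induction w with
      | nil => exact id
      | cons h p ih => intro ha; exact ih (hclosed _ ha _ h)
    obtain ⟨a, haS⟩ := hS
    have hall' : ∀ v, v ∈ S := fun v => key a v (hconn.preconnected a v).some haS
    obtain ⟨x, hx⟩ := hx
    refine ⟨x, hall' x, ?_⟩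
    rw [Finset.eq_univ_of_forall hall']
    exact hx
end

section
/- Let (G, τ) be a simple graph on n ≥ 2 vertices with integer thresholds 1 ≤ τ(v) ≤ deg_G(v). Construct the weighted complete graph (K_n, ω, τ′) on the same vertex set, with τ′(v) = n·τ(v), ω(e) = n if e ∈ E(G), and ω(e) = 1 if e ∉ E(G). Then any set D ⊆ V that is a target set for (G, τ) under the unweighted activation process is also a target set for (K_n, ω, τ′) under the weighted activation process. -/
open Finset

variable {V : Type*}

instance [DecidableEq V] : DecidableRel (⊤ : SimpleGraph V).Adj :=
  fun x y => inferInstanceAs (Decidable (x ≠ y))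

/-- a target set for `(G, τ)` is a target set for the associated
weighted complete graph `(K_n, ω, τ')`. -/
theorem targetSet_to_weighted_complete [Fintype V] [DecidableEq V] (G : SimpleGraph V)
    [DecidableRel G.Adj] (τ : V → ℕ)
    (hn : 2 ≤ Fintype.card V)
    (hτ : ∀ v, 1 ≤ τ v ∧ τ v ≤ G.degree v)
    (D : Finset V) (hD : IsTargetSetU G τ D) :
    IsTargetSetW (⊤ : SimpleGraph V)
      (fun e => if e ∈ G.edgeFinset then (Fintype.card V : ℚ) else 1)
      (fun v => (Fintype.card V : ℚ) * τ v) D := by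
  intro v
  obtain ⟨t, hv⟩ := hD v
  refine ⟨t, ?_⟩
  set n := Fintype.card V with hn'
  set ω : Sym2 V → ℚ := fun e => if e ∈ G.edgeFinset then (n : ℚ) else 1 with hω
  suffices h : ∀ s, ActiveU G τ D s ⊆
      ActiveW (⊤ : SimpleGraph V) ω (fun v => (n : ℚ) * τ v) D s from h t hv
  intro s
  induction s with
  | zero => exact fun x hx => hx
  | succ s ih =>
      intro x hx
      rw [ActiveU] at hx
      rw [ActiveW]
      rcases Finset.mem_union.mp hx with hx | hx
      · exact Finset.mem_union_left _ (ih hx)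
      · refine Finset.mem_union_right _ (Finset.mem_filter.mpr ⟨Finset.mem_univ _, ?_⟩)
        obtain ⟨-, hcard⟩ := Finset.mem_filter.mp hx
        set W := ActiveW (⊤ : SimpleGraph V) ω (fun v => (n : ℚ) * τ v) D s with hW
        have hsub : (ActiveU G τ D s).filter (G.Adj x) ⊆ W.filter (G.Adj x) :=
          Finset.filter_subset_filter _ ih
        have hc2 : τ x ≤ (W.filter (G.Adj x)).card :=
          hcard.trans (Finset.card_le_card hsub)
        have h1 : (n : ℚ) * τ x ≤ (n : ℚ) * (W.filter (G.Adj x)).card := by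
          have : (0:ℚ) ≤ n := by positivity
          exact mul_le_mul_of_nonneg_left (by exact_mod_cast hc2) this
        have h2 : (n : ℚ) * (W.filter (G.Adj x)).card
            = ∑ y ∈ W.filter (G.Adj x), ω s(x, y) := by
          rw [Finset.sum_congr rfl (fun y hy => ?_), Finset.sum_const, nsmul_eq_mul, mul_comm]
          have hadj : G.Adj x y := (Finset.mem_filter.mp hy).2
          simp [hω, SimpleGraph.mem_edgeFinset, hadj]
        have h3 : ∑ y ∈ W.filter (G.Adj x), ω s(x, y)
            ≤ Influence (⊤ : SimpleGraph V) ω W x := by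
          apply Finset.sum_le_sum_of_subset_of_nonneg
          · intro y hy
            obtain ⟨hyW, hadj⟩ := Finset.mem_filter.mp hy
            exact Finset.mem_filter.mpr ⟨hyW, hadj.ne⟩
          · intro y _ _
            by_cases he : s(x, y) ∈ G.edgeFinset <;> simp [hω, he] <;> positivity
        calc (n : ℚ) * τ x ≤ (n:ℚ) * (W.filter (G.Adj x)).card := h1
          _ = _ := h2
          _ ≤ _ := h3
end

section
/- Let (G, τ) be a simple graph on n ≥ 2 vertices with integer thresholds 1 ≤ τ(v) ≤ deg_G(v), and (K_n, ω, τ′) the weighted complete graph with τ′(v) = n·τ(v), ω(e) = n for e ∈ E(G) and ω(e) = 1 for e ∉ E(G). Then any target set W ⊆ V for (K_n, ω, τ′) under the weighted activation process is also a target set for (G, τ) under the unweighted activation process. -/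
open Finset

variable {V : Type*}

/-- a target set for the associated weighted complete graph
`(K_n, ω, τ')` is a target set for `(G, τ)`. -/
theorem targetSet_from_weighted_complete [Fintype V] [DecidableEq V] (G : SimpleGraph V)
    [DecidableRel G.Adj] (τ : V → ℕ)
    (hn : 2 ≤ Fintype.card V)
    (hτ : ∀ v, 1 ≤ τ v ∧ τ v ≤ G.degree v)
    (W : Finset V)
    (hW : IsTargetSetW (⊤ : SimpleGraph V)
      (fun e => if e ∈ G.edgeFinset then (Fintype.card V : ℚ) else 1)
      (fun v => (Fintype.card V : ℚ) * τ v) W) :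
    IsTargetSetU G τ W := by
  intro v
  obtain ⟨t, hv⟩ := hW v
  refine ⟨t, ?_⟩
  set n := Fintype.card V with hn'
  set ω : Sym2 V → ℚ := fun e => if e ∈ G.edgeFinset then (n : ℚ) else 1 with hω
  set τ' : V → ℚ := fun v => (n : ℚ) * τ v with hτ'
  suffices h : ∀ s, ActiveW (⊤ : SimpleGraph V) ω τ' W s ⊆ ActiveU G τ W s from h t hv
  intro s
  induction s with
  | zero => simp [ActiveW, ActiveU]
  | succ s ih =>
    intro x hx
    simp only [ActiveW, Finset.mem_union, Finset.mem_filter, Finset.mem_univ, true_and] at hx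
    rcases hx with hx | hx
    · exact Finset.mem_union_left _ (ih hx)
    · refine Finset.mem_union_right _ (Finset.mem_filter.mpr ⟨Finset.mem_univ _, ?_⟩)
      set A := ActiveW (⊤ : SimpleGraph V) ω τ' W s with hA
      set B := ActiveU G τ W s with hB
      set d := (A.filter (G.Adj x)).card with hd
      -- compute influence bound
      have hsplit : Influence (⊤ : SimpleGraph V) ω A x ≤ (n : ℚ) * d + (n - 1) := by
        rw [Influence]
        have : ∑ y ∈ A.filter ((⊤ : SimpleGraph V).Adj x), ω s(x, y)
            = ∑ y ∈ (A.filter ((⊤ : SimpleGraph V).Adj x)).filter (fun y => G.Adj x y), (n:ℚ)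
              + ∑ y ∈ (A.filter ((⊤ : SimpleGraph V).Adj x)).filter (fun y => ¬ G.Adj x y), 1 := by
          rw [← Finset.sum_filter_add_sum_filter_not (A.filter ((⊤ : SimpleGraph V).Adj x))
            (fun y => G.Adj x y)]
          congr 1
          · apply Finset.sum_congr rfl
            intro y hy
            simp only [Finset.mem_filter] at hy
            simp [hω, SimpleGraph.mem_edgeFinset, hy.2]
          · apply Finset.sum_congr rfl
            intro y hy
            simp only [Finset.mem_filter] at hy
            simp [hω, SimpleGraph.mem_edgeFinset, hy.2]
        rw [this, Finset.sum_const, Finset.sum_const, nsmul_eq_mul, nsmul_eq_mul, mul_one]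
        have h1 : (A.filter ((⊤ : SimpleGraph V).Adj x)).filter (fun y => G.Adj x y)
            = A.filter (G.Adj x) := by
          ext y
          simp only [Finset.mem_filter, SimpleGraph.top_adj, and_assoc]
          constructor
          · rintro ⟨h1, _, h3⟩; exact ⟨h1, h3⟩
          · rintro ⟨h1, h3⟩; exact ⟨h1, h3.ne, h3⟩
        have h2 : ((A.filter ((⊤ : SimpleGraph V).Adj x)).filter (fun y => ¬ G.Adj x y)).card
            ≤ n - 1 := by
          have hsub : (A.filter ((⊤ : SimpleGraph V).Adj x)).filter (fun y => ¬ G.Adj x y)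
              ⊆ Finset.univ.erase x := by
            intro y hy
            simp only [Finset.mem_filter, SimpleGraph.top_adj] at hy
            exact Finset.mem_erase.mpr ⟨(hy.1.2).symm, Finset.mem_univ _⟩
          calc _ ≤ (Finset.univ.erase x).card := Finset.card_le_card hsub
            _ = n - 1 := by rw [Finset.card_erase_of_mem (Finset.mem_univ _), Finset.card_univ]
        rw [h1]
        have hcast : (((A.filter ((⊤ : SimpleGraph V).Adj x)).filter
            (fun y => ¬ G.Adj x y)).card : ℚ) ≤ (n : ℚ) - 1 := by
          have := (Nat.cast_le (α := ℚ)).mpr h2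
          have hn1 : (1:ℕ) ≤ n := le_trans (by norm_num) hn
          calc (((A.filter ((⊤ : SimpleGraph V).Adj x)).filter
              (fun y => ¬ G.Adj x y)).card : ℚ) ≤ ((n - 1 : ℕ) : ℚ) := this
            _ = (n : ℚ) - 1 := by push_cast [hn1]; ring
        linarith [hcast]
      -- from τ' x ≤ Influence
      have hτx : (n : ℚ) * τ x ≤ (n : ℚ) * d + (n - 1) := le_trans hx hsplit
      have hnpos : (0:ℚ) < (n : ℚ) := by
        have : 0 < n := lt_of_lt_of_le (by norm_num) hn
        exact_mod_cast this
      have hlt : ((τ x : ℚ)) < (d : ℚ) + 1 := by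
        nlinarith
      have hle : τ x ≤ d := by
        have : (τ x : ℚ) < ((d + 1 : ℕ) : ℚ) := by push_cast; linarith
        exact Nat.lt_succ_iff.mp (by exact_mod_cast this)
      have hsub : A.filter (G.Adj x) ⊆ B.filter (G.Adj x) :=
        Finset.filter_subset_filter _ ih
      exact le_trans hle (Finset.card_le_card hsub)
end

section
/- Let (G, τ) be a simple graph on n ≥ 2 vertices with integer thresholds 1 ≤ τ(v) ≤ deg_G(v), and (K_n, ω, τ′) the associated weighted complete graph (τ′(v) = n·τ(v); ω(e) = n for e ∈ E(G), ω(e) = 1 otherwise). Then the minimum size of a target set for (G, τ) equals the minimum size of a target set for (K_n, ω, τ′). -/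
open Finset

variable {V : Type*}

lemma influence_key [Fintype V] [DecidableEq V] (G : SimpleGraph V)
    [DecidableRel G.Adj] (τ : V → ℕ) (hn : 2 ≤ Fintype.card V)
    (A : Finset V) (x : V) :
    ((Fintype.card V : ℚ) * τ x ≤
      Influence (⊤ : SimpleGraph V)
        (fun e => if e ∈ G.edgeFinset then (Fintype.card V : ℚ) else 1) A x)
    ↔ τ x ≤ (A.filter (G.Adj x)).card := by
  set n := Fintype.card V
  have hInf : Influence (⊤ : SimpleGraph V)
      (fun e => if e ∈ G.edgeFinset then (n : ℚ) else 1) A x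
      = (n : ℚ) * (A.filter (G.Adj x)).card
        + ((A.filter (fun y => x ≠ y ∧ ¬ G.Adj x y)).card : ℚ) := by
    unfold Influence
    have : ∀ y ∈ A.filter ((⊤ : SimpleGraph V).Adj x),
        (if s(x, y) ∈ G.edgeFinset then (n : ℚ) else 1)
          = (if G.Adj x y then (n : ℚ) else 1) := by
      intro y _
      simp [SimpleGraph.mem_edgeFinset]
    rw [Finset.sum_congr rfl this, Finset.sum_ite, Finset.sum_const, Finset.sum_const]
    have h1 : (A.filter ((⊤ : SimpleGraph V).Adj x)).filter (fun y => G.Adj x y)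
        = A.filter (G.Adj x) := by
      ext y
      simp only [Finset.mem_filter, SimpleGraph.top_adj]
      constructor
      · rintro ⟨⟨hA, _⟩, h⟩; exact ⟨hA, h⟩
      · rintro ⟨hA, h⟩; exact ⟨⟨hA, G.ne_of_adj h⟩, h⟩
    have h2 : (A.filter ((⊤ : SimpleGraph V).Adj x)).filter (fun y => ¬ G.Adj x y)
        = A.filter (fun y => x ≠ y ∧ ¬ G.Adj x y) := by
      ext y
      simp only [Finset.mem_filter, SimpleGraph.top_adj, and_assoc]
    rw [h1, h2]
    push_cast
    ring
  rw [hInf]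
  set d := (A.filter (G.Adj x)).card
  set r := (A.filter (fun y => x ≠ y ∧ ¬ G.Adj x y)).card
  have hr : r ≤ n - 1 := by
    have : A.filter (fun y => x ≠ y ∧ ¬ G.Adj x y) ⊆ Finset.univ.erase x := by
      intro y hy
      simp only [Finset.mem_filter] at hy
      exact Finset.mem_erase.2 ⟨(hy.2.1).symm, Finset.mem_univ y⟩
    have := Finset.card_le_card this
    simpa [Finset.card_erase_of_mem, n] using this
  have hrQ : (r : ℚ) ≤ (n : ℚ) - 1 := by
    have h1 : (1 : ℕ) ≤ n := le_trans (by norm_num) hn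
    have := (Nat.cast_le (α := ℚ)).2 hr
    rw [Nat.cast_sub h1] at this
    simpa using this
  constructor
  · intro h
    by_contra hc
    push_neg at hc
    have hdt : (d : ℚ) + 1 ≤ (τ x : ℚ) := by exact_mod_cast hc
    have hn2 : (2 : ℚ) ≤ (n : ℚ) := by exact_mod_cast hn
    nlinarith
  · intro h
    have hdt : (τ x : ℚ) ≤ (d : ℚ) := by exact_mod_cast h
    have hn0 : (0 : ℚ) ≤ (n : ℚ) := by positivity
    have hr0 : (0 : ℚ) ≤ (r : ℚ) := by positivity
    nlinarith

lemma activeW_eq_activeU [Fintype V] [DecidableEq V] (G : SimpleGraph V)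
    [DecidableRel G.Adj] (τ : V → ℕ) (hn : 2 ≤ Fintype.card V) (D : Finset V) (t : ℕ) :
    ActiveW (⊤ : SimpleGraph V)
      (fun e => if e ∈ G.edgeFinset then (Fintype.card V : ℚ) else 1)
      (fun v => (Fintype.card V : ℚ) * τ v) D t = ActiveU G τ D t := by
  induction t with
  | zero => rfl
  | succ t ih =>
    show _ ∪ _ = _ ∪ _
    rw [ih]
    congr 1
    ext x
    simp only [Finset.mem_filter, Finset.mem_univ, true_and]
    exact influence_key G τ hn (ActiveU G τ D t) x

/-- the minimum target-set sizes of `(G, τ)` and of the associated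
weighted complete graph coincide. -/
theorem dyn_eq_dyn_weighted_complete [Fintype V] [DecidableEq V] (G : SimpleGraph V)
    [DecidableRel G.Adj] (τ : V → ℕ)
    (hn : 2 ≤ Fintype.card V)
    (hτ : ∀ v, 1 ≤ τ v ∧ τ v ≤ G.degree v) :
    sInf {k : ℕ | ∃ D : Finset V, IsTargetSetU G τ D ∧ D.card = k} =
      sInf {k : ℕ | ∃ D : Finset V,
        IsTargetSetW (⊤ : SimpleGraph V)
          (fun e => if e ∈ G.edgeFinset then (Fintype.card V : ℚ) else 1)
          (fun v => (Fintype.card V : ℚ) * τ v) D ∧ D.card = k} := by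
  have key : ∀ D : Finset V, IsTargetSetU G τ D ↔
      IsTargetSetW (⊤ : SimpleGraph V)
        (fun e => if e ∈ G.edgeFinset then (Fintype.card V : ℚ) else 1)
        (fun v => (Fintype.card V : ℚ) * τ v) D := by
    intro D
    unfold IsTargetSetU IsTargetSetW
    constructor <;> intro h v <;> obtain ⟨t, ht⟩ := h v <;> exact ⟨t,
      by rw [activeW_eq_activeU G τ hn] at *; exact ht⟩
  congr 1
  ext k
  simp only [Set.mem_setOf_eq]
  constructor <;> rintro ⟨D, hD, hc⟩
  · exact ⟨D, (key D).1 hD, hc⟩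
  · exact ⟨D, (key D).2 hD, hc⟩
end
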